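/- The map sending a finite antichain a of a poset D to its downward closure ↓a is an order isomorphism between the poset A_f(D) of finite antichains (with a ≤ b iff ∀α∈a ∃β∈b α≤β) and the poset of compact elements of the complete lattice I(D) of initial segments ordered by inclusion. -/

import Mathlib

/-- A finite antichain of a poset `D`. -/
def FinAntichain (D : Type*) [PartialOrder D] := {a : Finset D // IsAntichain (· ≤ ·) (a : Set D)}

/-- The order `a ≤ b` iff every element of `a` is below some element of `b`. -/
instance {D : Type*} [PartialOrder D] : Preorder (FinAntichain D) where
  le a b := ∀ α ∈ a.1, ∃ β ∈ b.1, α ≤ β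
  le_refl a := fun α h => ⟨α, h, le_refl α⟩
  le_trans a b c hab hbc := fun α hα => by
    obtain ⟨β, hβ, h1⟩ := hab α hα
    obtain ⟨γ, hγ, h2⟩ := hbc β hβ
    exact ⟨γ, hγ, h1.trans h2⟩

/-- An element `c` of the complete lattice `I(D)` of initial segments is compact if whenever
`c ≤ ⨆ S` for a nonempty directed family `S`, then `c ≤ s` for some `s ∈ S`. -/
def IsCompactElt {D : Type*} [PartialOrder D] (c : LowerSet D) : Prop :=
  ∀ S : Set (LowerSet D), S.Nonempty → DirectedOn (· ≤ ·) S → c ≤ sSup S → ∃ s ∈ S, c ≤ s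

section Aux

variable {D : Type*} [PartialOrder D]

lemma isCompactElt_lowerClosure_finset (a : Finset D) :
    IsCompactElt (lowerClosure (a : Set D)) := by
  intro S hS hdir hle
  haveI : Nonempty S := hS.to_subtype
  have hdir' : Directed (· ⊆ ·) (fun s : S => ((s : LowerSet D) : Set D)) := by
    rintro ⟨s, hs⟩ ⟨t, ht⟩
    obtain ⟨u, hu, hsu, htu⟩ := hdir s hs t ht
    exact ⟨⟨u, hu⟩, hsu, htu⟩
  have hsub : (a : Set D) ⊆ ⋃ s : S, ((s : LowerSet D) : Set D) := by
    intro x hx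
    have : x ∈ (lowerClosure (a : Set D) : Set D) := subset_lowerClosure hx
    have := hle this
    rw [LowerSet.coe_sSup] at this
    simp only [Set.mem_iUnion] at this ⊢
    obtain ⟨s, hs, hxs⟩ := this
    exact ⟨⟨s, hs⟩, hxs⟩
  obtain ⟨⟨s, hs⟩, hsub'⟩ := hdir'.exists_mem_subset_of_finset_subset_biUnion hsub
  refine ⟨s, hs, ?_⟩
  intro x hx
  obtain ⟨y, hy, hxy⟩ := hx
  exact s.lower hxy (hsub' hy)

/-- Every compact element is the lower closure of a finite set. -/
lemma exists_finset_of_compact {c : LowerSet D} (hc : IsCompactElt c) :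
    ∃ F : Finset D, (F : Set D) ⊆ (c : Set D) ∧ c = lowerClosure (F : Set D) := by
  classical
  set S : Set (LowerSet D) :=
    {l | ∃ F : Finset D, (F : Set D) ⊆ (c : Set D) ∧ l = lowerClosure (F : Set D)} with hSdef
  have hne : S.Nonempty := ⟨lowerClosure ((∅ : Finset D) : Set D), ∅, by simp, rfl⟩
  have hdir : DirectedOn (· ≤ ·) S := by
    rintro _ ⟨F, hF, rfl⟩ _ ⟨G, hG, rfl⟩
    refine ⟨lowerClosure ((F ∪ G : Finset D) : Set D), ⟨F ∪ G, ?_, rfl⟩, ?_, ?_⟩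
    · intro x hx
      simp only [Finset.coe_union, Set.mem_union] at hx
      exact hx.elim (fun h => hF h) (fun h => hG h)
    · exact lowerClosure_mono (by simp [Finset.coe_union])
    · exact lowerClosure_mono (by simp [Finset.coe_union])
  have hle : c ≤ sSup S := by
    intro x hx
    rw [LowerSet.coe_sSup]
    simp only [Set.mem_iUnion]
    refine ⟨lowerClosure (({x} : Finset D) : Set D), ⟨{x}, by simpa using hx, rfl⟩, ?_⟩
    simp
  obtain ⟨s, ⟨F, hF, rfl⟩, hcs⟩ := hc S hne hdir hle
  refine ⟨F, hF, le_antisymm hcs ?_⟩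
  intro x hx
  obtain ⟨y, hy, hxy⟩ := hx
  exact c.lower hxy (hF hy)

/-- From a finite set extract an antichain with the same lower closure. -/
lemma exists_antichain_lowerClosure (F : Finset D) :
    ∃ a : Finset D, IsAntichain (· ≤ ·) (a : Set D) ∧
      lowerClosure (a : Set D) = lowerClosure (F : Set D) := by
  classical
  refine ⟨F.filter (fun x => ∀ y ∈ F, x ≤ y → x = y), ?_, ?_⟩
  · intro x hx y hy hxy hle
    simp only [Finset.coe_filter, Set.mem_setOf_eq] at hx hy
    exact hxy (hx.2 y hy.1 hle)
  · apply le_antisymm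
    · refine lowerClosure_mono ?_
      intro x hx
      simp only [Finset.coe_filter, Set.mem_setOf_eq] at hx
      simpa using hx.1
    · intro x hx
      obtain ⟨y, hy, hxy⟩ := hx
      -- find a maximal element of F above y
      have hfin : ({z ∈ (F : Set D) | y ≤ z}).Finite := F.finite_toSet.subset (fun z hz => hz.1)
      obtain ⟨m, hm, hmax⟩ := Set.Finite.exists_maximalFor id _ hfin ⟨y, by simpa using hy, le_rfl⟩
      obtain ⟨hmF, hym⟩ := hm
      refine ⟨m, ?_, hxy.trans hym⟩
      simp only [Finset.coe_filter, Set.mem_setOf_eq]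
      refine ⟨by simpa using hmF, fun z hz hmz => ?_⟩
      exact le_antisymm hmz (hmax ⟨by simpa using hz, hym.trans hmz⟩ hmz)

lemma le_iff_lowerClosure_le (a b : FinAntichain D) :
    lowerClosure ((a.1 : Finset D) : Set D) ≤ lowerClosure ((b.1 : Finset D) : Set D) ↔ a ≤ b := by
  constructor
  · intro h α hα
    have : α ∈ (lowerClosure ((b.1 : Finset D) : Set D) : Set D) := h (subset_lowerClosure hα)
    obtain ⟨β, hβ, hle⟩ := this
    exact ⟨β, by simpa using hβ, hle⟩
  · intro h x hx
    obtain ⟨y, hy, hxy⟩ := hx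
    obtain ⟨β, hβ, hle⟩ := h y (by simpa using hy)
    exact ⟨β, by simpa using hβ, hxy.trans hle⟩

lemma antichain_eq_of_le_le {a b : FinAntichain D} (hab : a ≤ b) (hba : b ≤ a) : a = b := by
  have key : ∀ (u v : FinAntichain D), u ≤ v → v ≤ u → u.1 ⊆ v.1 := by
    intro u v huv hvu α hα
    obtain ⟨β, hβ, h1⟩ := huv α hα
    obtain ⟨α', hα', h2⟩ := hvu β hβ
    have : α = α' := by
      by_contra hne
      exact u.2 (by simpa using hα) (by simpa using hα') hne (h1.trans h2)
    have hβα : β = α := le_antisymm (this ▸ h2) h1 |>.symm ▸ rfl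
    have : α = β := le_antisymm h1 (this ▸ h2)
    exact this ▸ hβ
  have h1 := key a b hab hba
  have h2 := key b a hba hab
  exact Subtype.ext (le_antisymm h1 h2)

end Aux

/-- `a ↦ ↓a` is an order isomorphism between the poset `A_f(D)` of finite
antichains and the poset of compact elements of `I(D)`. -/
theorem finAntichain_orderIso_compacts {D : Type*} [PartialOrder D] :
    ∃ e : FinAntichain D ≃o {c : LowerSet D // IsCompactElt c},
      ∀ a : FinAntichain D,
        (((e a : {c : LowerSet D // IsCompactElt c}) : LowerSet D) : Set D) =
          ((lowerClosure ((a.1 : Finset D) : Set D) : LowerSet D) : Set D) := by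
  classical
  set f : FinAntichain D → {c : LowerSet D // IsCompactElt c} :=
    fun a => ⟨lowerClosure ((a.1 : Finset D) : Set D), isCompactElt_lowerClosure_finset a.1⟩
    with hf
  have hinj : Function.Injective f := by
    intro a b hab
    have h : lowerClosure ((a.1 : Finset D) : Set D) = lowerClosure ((b.1 : Finset D) : Set D) :=
      congrArg Subtype.val hab
    exact antichain_eq_of_le_le ((le_iff_lowerClosure_le a b).1 h.le)
      ((le_iff_lowerClosure_le b a).1 h.ge)
  have hsurj : Function.Surjective f := by
    rintro ⟨c, hc⟩
    obtain ⟨F, _, rfl⟩ := exists_finset_of_compact hc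
    obtain ⟨a, ha, haF⟩ := exists_antichain_lowerClosure F
    exact ⟨⟨a, ha⟩, Subtype.ext haF⟩
  refine ⟨{ toEquiv := Equiv.ofBijective f ⟨hinj, hsurj⟩
            map_rel_iff' := ?_ }, fun a => rfl⟩
  intro a b
  show f a ≤ f b ↔ a ≤ b
  exact le_iff_lowerClosure_le a b
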